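/- Let γ ∈ (0,1), α ∈ (0,1), ξ ≥ 0, let θ : ℝ → ℝ be bounded, Lipschitz and 2π-periodic, let h ≠ 0, x ∈ ℝ, and let V > 0 satisfy |θ(x′+h′) − θ(x′)| ≤ V·(ξ² + h′²)^{α/2} for all x′, h′ ∈ ℝ. Let R > 0 satisfy R ≥ 4|h|, and let χ : ℝ → ℝ be continuously differentiable with χ(z) = 0 for |z| ≤ 1, χ(z) = 1 for |z| ≥ 2 and |χ′| ≤ 2. Then, writing δ_hθ(x) = θ(x+h) − θ(x), there exist absolute constants c₁, c₂ ≥ 1 (with c₂ allowed to depend on a positive lower bound γ₀ ≤ γ) such that | ∫_ℝ (θ(x+y) − θ(x)) · ( g(y−h) − g(y) ) dy | ≤ c₁·c₂·(|h|·V/R^γ)·( ξ^α/R + 1/R^{1−α} ), where g(y) = χ(|y|/R)/|y|^{1+γ} for y ≠ 0 and g(0) = 0, and the integral converges absolutely. -/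

import Mathlib

open Real MeasureTheory Set

lemma rpow_add_le_add_rpow' (a b p : ℝ) (ha : 0 ≤ a) (hb : 0 ≤ b) (hp0 : 0 ≤ p)
    (hp1 : p ≤ 1) : (a + b) ^ p ≤ a ^ p + b ^ p := by
  lift a to NNReal using ha
  lift b to NNReal using hb
  have := NNReal.rpow_add_le_add_rpow a b hp0 hp1
  exact_mod_cast this

lemma abs_sign_one {ζ : ℝ} (hζ : ζ ≠ 0) : |(SignType.sign ζ : ℝ)| = 1 := by
  rcases hζ.lt_or_gt with h | h <;> simp [h, h.le, sign_neg, sign_pos]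

lemma tail_int (p a : ℝ) (hp : p < -1) (ha : 0 < a) :
    IntegrableOn (fun y : ℝ => |y| ^ p) {y : ℝ | a ≤ |y|} ∧
    ∫ y in {y : ℝ | a ≤ |y|}, |y| ^ p = 2 * (a ^ (p + 1) / (-(p + 1))) := by
  have hset : {y : ℝ | a ≤ |y|} = Iic (-a) ∪ Ici a := by
    ext y
    simp only [mem_setOf_eq, mem_union, mem_Iic, mem_Ici, le_abs]
    constructor
    · rintro (h | h)
      · right; exact h
      · left; linarith
    · rintro (h | h)
      · right; linarith
      · left; exact h
  have hIci : IntegrableOn (fun y : ℝ => |y| ^ p) (Ici a) := by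
    rw [integrableOn_congr_fun (g := fun y : ℝ => y ^ p) ?_ measurableSet_Ici]
    · rw [integrableOn_Ici_iff_integrableOn_Ioi]
      exact integrableOn_Ioi_rpow_of_lt hp ha
    · intro y hy
      simp only
      rw [abs_of_pos (lt_of_lt_of_le ha hy)]
  have hIic : IntegrableOn (fun y : ℝ => |y| ^ p) (Iic (-a)) := by
    have h1 : Integrable ((Ici a).indicator (fun y : ℝ => |y| ^ p)) :=
      (integrable_indicator_iff measurableSet_Ici).2 hIci
    have h2 := h1.comp_mul_left' (R := -1) (by norm_num)
    have h3 : (fun x : ℝ => (Ici a).indicator (fun y : ℝ => |y| ^ p) (-1 * x))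
        = (Iic (-a)).indicator (fun y : ℝ => |y| ^ p) := by
      funext x
      by_cases hx : x ∈ Iic (-a)
      · rw [indicator_of_mem hx]
        rw [indicator_of_mem (by simp at hx ⊢; linarith)]
        simp
      · rw [indicator_of_notMem hx, indicator_of_notMem ?_]
        simp only [mem_Iic, not_le] at hx ⊢
        simp only [mem_Ici, not_le]
        linarith
    rw [h3] at h2
    exact (integrable_indicator_iff measurableSet_Iic).1 h2
  have hIciI : ∫ y in Ici a, |y| ^ p = a ^ (p + 1) / (-(p + 1)) := by
    rw [setIntegral_congr_fun measurableSet_Ici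
      (g := fun y : ℝ => y ^ p) (fun y hy => by simp only; rw [abs_of_pos (lt_of_lt_of_le ha hy)])]
    rw [integral_Ici_eq_integral_Ioi, integral_Ioi_rpow_of_lt hp ha]
    rw [neg_div, div_neg]
  have hIicI : ∫ y in Iic (-a), |y| ^ p = a ^ (p + 1) / (-(p + 1)) := by
    have := integral_comp_neg_Iic (c := -a) (f := fun y : ℝ => |y| ^ p)
    simp only [abs_neg, neg_neg] at this
    rw [this, ← integral_Ici_eq_integral_Ioi] at *
    exact hIciI
  have hdisj : Disjoint (Iic (-a)) (Ici a) := by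
    rw [Set.disjoint_left]
    intro y hy hy'
    simp only [mem_Iic, mem_Ici] at hy hy'
    linarith
  constructor
  · rw [hset]; exact hIic.union hIci
  · rw [hset, setIntegral_union hdisj measurableSet_Ici hIic hIci, hIciI, hIicI]
    ring

lemma chi_bound (χ : ℝ → ℝ) (hχ : ContDiff ℝ 1 χ) (hχ1 : ∀ z : ℝ, |z| ≤ 1 → χ z = 0)
    (hχ2 : ∀ z : ℝ, 2 ≤ |z| → χ z = 1) (hχ' : ∀ z : ℝ, |deriv χ z| ≤ 2) (z : ℝ) :
    |χ z| ≤ 2 := by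
  have hlip : ∀ u w : ℝ, |χ u - χ w| ≤ 2 * |u - w| := by
    intro u w
    have := convex_univ.norm_image_sub_le_of_norm_deriv_le (f := χ)
      (fun x _ => (hχ.differentiable one_ne_zero).differentiableAt)
      (fun x _ => by simpa using hχ' x) (mem_univ w) (mem_univ u)
    simpa [Real.norm_eq_abs] using this
  rcases le_or_gt |z| 1 with hz | hz
  · rw [hχ1 z hz]; norm_num
  rcases le_or_gt 2 |z| with hz2 | hz2
  · rw [hχ2 z hz2]; norm_num
  rcases le_or_gt 0 z with hz0 | hz0
  · have hzz : |z| = z := abs_of_nonneg hz0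
    have h1 : χ 1 = 0 := hχ1 1 (by norm_num)
    calc |χ z| = |χ z - χ 1| := by rw [h1, sub_zero]
    _ ≤ 2 * |z - 1| := hlip z 1
    _ ≤ 2 := by rw [abs_of_nonneg (by linarith [hzz ▸ hz.le])]; linarith [hzz ▸ hz2]
  · have hzz : |z| = -z := abs_of_neg hz0
    have h1 : χ (-1) = 0 := hχ1 (-1) (by norm_num)
    calc |χ z| = |χ z - χ (-1)| := by rw [h1, sub_zero]
    _ ≤ 2 * |z - (-1)| := hlip z (-1)
    _ ≤ 2 := by
        rw [abs_of_nonpos (by nlinarith [hzz ▸ hz.le])]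
        nlinarith [hzz ▸ hz2]

lemma kernel_hasDerivAt (χ : ℝ → ℝ) (hχ : ContDiff ℝ 1 χ) (R γ : ℝ) (ζ : ℝ) (hζ : ζ ≠ 0) :
    HasDerivAt (fun y : ℝ => χ (|y| / R) / |y| ^ (1 + γ))
      (deriv χ (|ζ| / R) * ((SignType.sign ζ : ℝ) / R) * |ζ| ^ (-(1 + γ))
        + χ (|ζ| / R) * ((SignType.sign ζ : ℝ) * (-(1 + γ)) * |ζ| ^ (-(1 + γ) - 1))) ζ := by
  have habs : HasDerivAt (fun y : ℝ => |y|) ((SignType.sign ζ : ℝ)) ζ := hasDerivAt_abs hζ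
  have h1 : HasDerivAt (fun y : ℝ => |y| / R) ((SignType.sign ζ : ℝ) / R) ζ := habs.div_const R
  have hχd : HasDerivAt χ (deriv χ (|ζ| / R)) (|ζ| / R) :=
    ((hχ.differentiable one_ne_zero) _).hasDerivAt
  have h2 : HasDerivAt (fun y : ℝ => χ (|y| / R))
      (deriv χ (|ζ| / R) * ((SignType.sign ζ : ℝ) / R)) ζ := hχd.comp ζ h1
  have h3 : HasDerivAt (fun y : ℝ => |y| ^ (-(1 + γ)))
      ((SignType.sign ζ : ℝ) * (-(1 + γ)) * |ζ| ^ (-(1 + γ) - 1)) ζ :=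
    habs.rpow_const (Or.inl (abs_ne_zero.2 hζ))
  have heq : (fun y : ℝ => χ (|y| / R) / |y| ^ (1 + γ))
      = fun y : ℝ => χ (|y| / R) * |y| ^ (-(1 + γ)) := by
    funext y
    rw [Real.rpow_neg (abs_nonneg y), div_eq_mul_inv]
  rw [heq]
  exact h2.mul h3

lemma kernel_deriv_bound (χ : ℝ → ℝ)
    (hχ2 : ∀ z : ℝ, 2 ≤ |z| → χ z = 1) (hχ' : ∀ z : ℝ, |deriv χ z| ≤ 2)
    (hχb : ∀ z : ℝ, |χ z| ≤ 2)
    (γ R ζ : ℝ) (hγ0 : 0 < γ) (hγ1 : γ ≤ 1) (hR : 0 < R) (hζ : R / 2 ≤ |ζ|) :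
    |deriv χ (|ζ| / R) * ((SignType.sign ζ : ℝ) / R) * |ζ| ^ (-(1 + γ))
        + χ (|ζ| / R) * ((SignType.sign ζ : ℝ) * (-(1 + γ)) * |ζ| ^ (-(1 + γ) - 1))|
      ≤ 8 * |ζ| ^ (-(2 + γ)) := by
  have hζ0 : 0 < |ζ| := lt_of_lt_of_le (half_pos hR) hζ
  have hζne : ζ ≠ 0 := abs_pos.1 hζ0
  have hsign : |(SignType.sign ζ : ℝ)| = 1 := by
    rcases hζne.lt_or_gt with h | h <;> simp [h]
  have hexp : -(1 + γ) - 1 = -(2 + γ) := by ring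
  have hrp : (0:ℝ) < |ζ| ^ (-(2 + γ)) := Real.rpow_pos_of_pos hζ0 _
  have ht2 : |χ (|ζ| / R) * ((SignType.sign ζ : ℝ) * (-(1 + γ)) * |ζ| ^ (-(1 + γ) - 1))|
      ≤ 4 * |ζ| ^ (-(2 + γ)) := by
    rw [hexp, abs_mul, abs_mul, abs_mul]
    rw [hsign, abs_of_pos hrp]
    have h1 : |(-(1 + γ))| = 1 + γ := by rw [abs_neg, abs_of_pos (by linarith)]
    rw [h1]
    calc |χ (|ζ| / R)| * (1 * (1 + γ) * |ζ| ^ (-(2 + γ)))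
        ≤ 2 * (1 * 2 * |ζ| ^ (-(2 + γ))) := by
          gcongr
          · exact hχb _
          · linarith
    _ = 4 * |ζ| ^ (-(2 + γ)) := by ring
  have ht1 : |deriv χ (|ζ| / R) * ((SignType.sign ζ : ℝ) / R) * |ζ| ^ (-(1 + γ))|
      ≤ 4 * |ζ| ^ (-(2 + γ)) := by
    rcases le_or_gt |ζ| (2 * R) with hcase | hcase
    · rw [abs_mul, abs_mul, abs_div, hsign]
      have hrp1 : (0:ℝ) < |ζ| ^ (-(1 + γ)) := Real.rpow_pos_of_pos hζ0 _
      rw [abs_of_pos hrp1, abs_of_pos hR]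
      have hinv : 1 / R ≤ 2 / |ζ| := by
        rw [div_le_div_iff₀ hR hζ0]; linarith
      have hco : |ζ| ^ (-(1 + γ)) / |ζ| = |ζ| ^ (-(2 + γ)) := by
        rw [div_eq_mul_inv, ← Real.rpow_neg_one |ζ|, ← Real.rpow_add hζ0]
        congr 1
      calc |deriv χ (|ζ| / R)| * (1 / R) * |ζ| ^ (-(1 + γ))
          ≤ 2 * (2 / |ζ|) * |ζ| ^ (-(1 + γ)) := by
            gcongr
            all_goals first | exact hχ' _ | exact hinv
      _ = 4 * (|ζ| ^ (-(1 + γ)) / |ζ|) := by rw [div_eq_mul_inv, div_eq_mul_inv]; ring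
      _ = 4 * |ζ| ^ (-(2 + γ)) := by rw [hco]
    · have hder0 : deriv χ (|ζ| / R) = 0 := by
        have h2lt : (2:ℝ) < |ζ| / R := by rw [lt_div_iff₀ hR]; linarith
        have hev : χ =ᶠ[nhds (|ζ| / R)] fun _ => 1 := by
          filter_upwards [Ioi_mem_nhds h2lt] with u hu
          exact hχ2 u (le_trans (le_of_lt hu) (le_abs_self u))
        rw [hev.deriv_eq, deriv_const]
      rw [hder0]
      simp only [zero_mul, abs_zero]
      exact (by positivity : (0:ℝ) < 4 * |ζ| ^ (-(2 + γ))).le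
  calc |deriv χ (|ζ| / R) * ((SignType.sign ζ : ℝ) / R) * |ζ| ^ (-(1 + γ))
        + χ (|ζ| / R) * ((SignType.sign ζ : ℝ) * (-(1 + γ)) * |ζ| ^ (-(1 + γ) - 1))|
      ≤ _ + _ := abs_add_le _ _
  _ ≤ 4 * |ζ| ^ (-(2 + γ)) + 4 * |ζ| ^ (-(2 + γ)) := add_le_add ht1 ht2
  _ = 8 * |ζ| ^ (-(2 + γ)) := by ring

lemma kernel_diff_bound (χ : ℝ → ℝ) (hχ : ContDiff ℝ 1 χ)
    (hχ2 : ∀ z : ℝ, 2 ≤ |z| → χ z = 1) (hχ' : ∀ z : ℝ, |deriv χ z| ≤ 2)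
    (hχb : ∀ z : ℝ, |χ z| ≤ 2)
    (γ R h y : ℝ) (hγ0 : 0 < γ) (hγ1 : γ ≤ 1) (hR : 0 < R)
    (hh : 4 * |h| ≤ R) (hy : 3 * R / 4 ≤ |y|) :
    |χ (|y - h| / R) / |y - h| ^ (1 + γ) - χ (|y| / R) / |y| ^ (1 + γ)|
      ≤ 27 * |y| ^ (-(2 + γ)) * |h| := by
  have hy0 : 0 < |y| := lt_of_lt_of_le (by linarith) hy
  have hRy : R ≤ 4 * |y| / 3 := by linarith
  -- lower bound for points on the segment
  have hmem : ∀ ζ ∈ uIcc (y - h) y, 2 * |y| / 3 ≤ |ζ| := by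
    intro ζ hζ
    rw [Set.mem_uIcc] at hζ
    have habs : |ζ - y| ≤ |h| := by
      rcases hζ with ⟨h1, h2⟩ | ⟨h1, h2⟩ <;>
        · rw [abs_le]
          constructor <;> linarith [le_abs_self h, neg_abs_le h]
    have : |y| - |ζ| ≤ |h| := by
      have := abs_sub_abs_le_abs_sub y ζ
      rw [abs_sub_comm] at habs
      linarith
    linarith [hh, hRy]
  have hmemR : ∀ ζ ∈ uIcc (y - h) y, R / 2 ≤ |ζ| := by
    intro ζ hζ
    have := hmem ζ hζ
    linarith [hy]
  have hconv : Convex ℝ (uIcc (y - h) y) := by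
    rw [Set.uIcc]; exact convex_Icc _ _
  set D : ℝ → ℝ := fun ζ =>
    deriv χ (|ζ| / R) * ((SignType.sign ζ : ℝ) / R) * |ζ| ^ (-(1 + γ))
      + χ (|ζ| / R) * ((SignType.sign ζ : ℝ) * (-(1 + γ)) * |ζ| ^ (-(1 + γ) - 1)) with hD
  have key := hconv.norm_image_sub_le_of_norm_hasDerivWithin_le
    (f := fun u : ℝ => χ (|u| / R) / |u| ^ (1 + γ)) (f' := D)
    (C := 8 * (2 * |y| / 3) ^ (-(2 + γ)))
    (fun ζ hζ => by
      have hζne : ζ ≠ 0 := by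
        have := hmemR ζ hζ
        intro hc
        rw [hc, abs_zero] at this
        linarith
      exact (kernel_hasDerivAt χ hχ R γ ζ hζne).hasDerivWithinAt)
    (fun ζ hζ => by
      have h1 := kernel_deriv_bound χ hχ2 hχ' hχb γ R ζ hγ0 hγ1 hR (hmemR ζ hζ)
      rw [Real.norm_eq_abs]
      refine le_trans h1 ?_
      have h2 : (2 * |y| / 3 : ℝ) ≤ |ζ| := hmem ζ hζ
      have h3 : (0:ℝ) < 2 * |y| / 3 := by linarith
      have := Real.rpow_le_rpow_of_nonpos h3 h2 (by linarith : -(2 + γ) ≤ 0)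
      linarith)
    (left_mem_uIcc) (right_mem_uIcc)
  rw [Real.norm_eq_abs, Real.norm_eq_abs] at key
  have hyy : y - (y - h) = h := by ring
  rw [hyy] at key
  rw [abs_sub_comm]
  refine le_trans key ?_
  -- now bound the constant
  have hsplit : (2 * |y| / 3 : ℝ) ^ (-(2 + γ)) = (2 / 3 : ℝ) ^ (-(2 + γ)) * |y| ^ (-(2 + γ)) := by
    rw [← Real.mul_rpow (by norm_num) (abs_nonneg y)]
    congr 1
    ring
  have hc23 : ((2:ℝ) / 3) ^ (-(2 + γ)) ≤ 27 / 8 := by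
    have e1 : ((2:ℝ) / 3) ^ (-(2 + γ)) = ((3:ℝ) / 2) ^ (2 + γ) := by
      rw [show ((2:ℝ) / 3) = ((3:ℝ) / 2)⁻¹ by norm_num,
        Real.inv_rpow (by norm_num), Real.rpow_neg (by norm_num), inv_inv]
    rw [e1]
    have e2 : ((3:ℝ) / 2) ^ (2 + γ) ≤ ((3:ℝ) / 2) ^ (3:ℝ) :=
      Real.rpow_le_rpow_of_exponent_le (by norm_num) (by linarith)
    have e3 : ((3:ℝ) / 2) ^ (3:ℝ) = 27 / 8 := by
      rw [show (3:ℝ) = ((3:ℕ):ℝ) by norm_num, Real.rpow_natCast]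
      norm_num
    linarith
  have hrpy : (0:ℝ) ≤ |y| ^ (-(2 + γ)) := Real.rpow_nonneg (abs_nonneg y) _
  calc 8 * (2 * |y| / 3) ^ (-(2 + γ)) * |h|
      = 8 * ((2 / 3 : ℝ) ^ (-(2 + γ)) * |y| ^ (-(2 + γ))) * |h| := by rw [hsplit]
  _ ≤ 8 * ((27 / 8) * |y| ^ (-(2 + γ))) * |h| := by
      have h4 : (2 / 3 : ℝ) ^ (-(2 + γ)) * |y| ^ (-(2 + γ)) ≤ (27 / 8) * |y| ^ (-(2 + γ)) :=
        mul_le_mul_of_nonneg_right hc23 hrpy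
      have h5 := mul_le_mul_of_nonneg_right h4 (abs_nonneg h)
      linarith
  _ = 27 * |y| ^ (-(2 + γ)) * |h| := by ring

lemma sq_rpow_half (t α : ℝ) (ht : 0 ≤ t) : (t ^ 2) ^ (α / 2) = t ^ α := by
  rw [← Real.rpow_natCast t 2, ← Real.rpow_mul ht]
  norm_num
  congr 1
  ring

theorem statement15 (γ₀ : ℝ) (hγ₀ : γ₀ ∈ Set.Ioo (0:ℝ) 1) :
    ∃ c₁ ≥ (1:ℝ), ∃ c₂ ≥ (1:ℝ), ∀ γ α : ℝ, γ ∈ Set.Ico γ₀ 1 → α ∈ Set.Ioo (0:ℝ) 1 →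
      ∀ ξ : ℝ, 0 ≤ ξ →
      ∀ θ : ℝ → ℝ, (∃ L : NNReal, LipschitzWith L θ) → (∃ B, ∀ x, |θ x| ≤ B) →
      (∀ x, θ (x + 2 * Real.pi) = θ x) →
      ∀ V : ℝ, 0 < V →
      (∀ x' h' : ℝ, |θ (x' + h') - θ x'| ≤ V * (ξ ^ 2 + h' ^ 2) ^ (α / 2)) →
      ∀ x h R : ℝ, h ≠ 0 → 4 * |h| ≤ R →
      ∀ χ : ℝ → ℝ, ContDiff ℝ 1 χ →
        (∀ z : ℝ, |z| ≤ 1 → χ z = 0) → (∀ z : ℝ, 2 ≤ |z| → χ z = 1) →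
        (∀ z : ℝ, |deriv χ z| ≤ 2) →
      Integrable (fun y : ℝ => (θ (x + y) - θ x) *
          (χ (|y - h| / R) / |y - h| ^ (1 + γ) - χ (|y| / R) / |y| ^ (1 + γ))) ∧
      |∫ y : ℝ, (θ (x + y) - θ x) *
          (χ (|y - h| / R) / |y - h| ^ (1 + γ) - χ (|y| / R) / |y| ^ (1 + γ))|
        ≤ c₁ * c₂ * (|h| * V / R ^ γ) * (ξ ^ α / R + 1 / R ^ (1 - α)) := by
  obtain ⟨hγ₀0, hγ₀1⟩ := hγ₀
  refine ⟨108, by norm_num, max 1 γ₀⁻¹, le_max_left _ _, ?_⟩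
  intro γ α hγ hα ξ hξ θ hθL hθB hθP V hV hVθ x h R hh hhR χ hχ hχ1 hχ2 hχ'
  obtain ⟨hγl, hγu⟩ := hγ
  obtain ⟨hα0, hα1⟩ := hα
  have hγ0 : 0 < γ := lt_of_lt_of_le hγ₀0 hγl
  have hh0 : 0 < |h| := abs_pos.2 hh
  have hR0 : 0 < R := lt_of_lt_of_le (by linarith) hhR
  have ha : (0:ℝ) < 3 * R / 4 := by linarith
  set S : Set ℝ := {y : ℝ | 3 * R / 4 ≤ |y|} with hS
  have hSmeas : MeasurableSet S := (isClosed_le continuous_const continuous_abs).measurableSet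
  have hχb : ∀ z : ℝ, |χ z| ≤ 2 := chi_bound χ hχ hχ1 hχ2 hχ'
  set F : ℝ → ℝ := fun y => (θ (x + y) - θ x) *
      (χ (|y - h| / R) / |y - h| ^ (1 + γ) - χ (|y| / R) / |y| ^ (1 + γ)) with hF
  set M : ℝ → ℝ := S.indicator
      (fun y => 27 * |h| * V * (ξ ^ α * |y| ^ (-(2 + γ)) + |y| ^ (α - (2 + γ)))) with hM
  have hp₁ : (-(2 + γ) : ℝ) < -1 := by linarith
  have hp₂ : (α - (2 + γ) : ℝ) < -1 := by linarith
  -- F vanishes off S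
  have hFz : ∀ y ∉ S, F y = 0 := by
    intro y hy
    simp only [hS, mem_setOf_eq, not_le] at hy
    have hy1 : χ (|y| / R) = 0 := by
      apply hχ1
      rw [abs_of_nonneg (by positivity)]
      rw [div_le_one hR0]
      linarith
    have hy2 : χ (|y - h| / R) = 0 := by
      apply hχ1
      rw [abs_of_nonneg (by positivity)]
      rw [div_le_one hR0]
      have := abs_sub y h
      linarith
    simp [hF, hy1, hy2]
  -- pointwise bound
  have hFbd : ∀ y, |F y| ≤ M y := by
    intro y
    by_cases hy : y ∈ S
    · rw [hM, indicator_of_mem hy]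
      have hyS : 3 * R / 4 ≤ |y| := hy
      have hy0 : 0 < |y| := lt_of_lt_of_le ha hyS
      have h1 : |θ (x + y) - θ x| ≤ V * (ξ ^ 2 + y ^ 2) ^ (α / 2) := hVθ x y
      have h2 := kernel_diff_bound χ hχ hχ2 hχ' hχb γ R h y hγ0 hγu.le hR0 hhR hyS
      have h3 : (ξ ^ 2 + y ^ 2) ^ (α / 2) ≤ ξ ^ α + |y| ^ α := by
        rw [show y ^ 2 = |y| ^ 2 from (sq_abs y).symm]
        have := rpow_add_le_add_rpow' (ξ ^ 2) (|y| ^ 2) (α / 2) (sq_nonneg ξ) (sq_nonneg _)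
          (by linarith) (by linarith)
        rw [sq_rpow_half ξ α hξ, sq_rpow_half |y| α (abs_nonneg y)] at this
        exact this
      have h4 : |y| ^ α * |y| ^ (-(2 + γ)) = |y| ^ (α - (2 + γ)) := by
        rw [← Real.rpow_add hy0]
        congr 1
      have hrp : (0:ℝ) ≤ |y| ^ (-(2 + γ)) := Real.rpow_nonneg (abs_nonneg y) _
      calc |F y| = |θ (x + y) - θ x| *
            |χ (|y - h| / R) / |y - h| ^ (1 + γ) - χ (|y| / R) / |y| ^ (1 + γ)| := abs_mul _ _
      _ ≤ (V * (ξ ^ 2 + y ^ 2) ^ (α / 2)) * (27 * |y| ^ (-(2 + γ)) * |h|) := by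
          apply mul_le_mul h1 h2 (abs_nonneg _)
          positivity
      _ ≤ (V * (ξ ^ α + |y| ^ α)) * (27 * |y| ^ (-(2 + γ)) * |h|) := by
          apply mul_le_mul_of_nonneg_right (mul_le_mul_of_nonneg_left h3 hV.le)
          positivity
      _ = 27 * |h| * V * (ξ ^ α * |y| ^ (-(2 + γ)) + |y| ^ α * |y| ^ (-(2 + γ))) := by ring
      _ = 27 * |h| * V * (ξ ^ α * |y| ^ (-(2 + γ)) + |y| ^ (α - (2 + γ))) := by rw [h4]
    · rw [hFz y hy, hM, indicator_of_notMem hy]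
      simp
  -- integrability of the majorant
  have hI₁ := tail_int (-(2 + γ)) (3 * R / 4) hp₁ ha
  have hI₂ := tail_int (α - (2 + γ)) (3 * R / 4) hp₂ ha
  have hMon : IntegrableOn
      (fun y : ℝ => 27 * |h| * V * (ξ ^ α * |y| ^ (-(2 + γ)) + |y| ^ (α - (2 + γ)))) S :=
    (((hI₁.1.const_mul (ξ ^ α)).add hI₂.1).const_mul (27 * |h| * V))
  have hMint : Integrable M := (integrable_indicator_iff hSmeas).2 hMon
  -- measurability of F
  have hθc : Continuous θ := by
    obtain ⟨L, hL⟩ := hθL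
    exact hL.continuous
  have hrc : Continuous (fun t : ℝ => t ^ (1 + γ)) :=
    Real.continuous_rpow_const (by linarith)
  have hmeas1 : Measurable fun y : ℝ => χ (|y - h| / R) / |y - h| ^ (1 + γ) := by
    have hc : Continuous fun y : ℝ => |y - h| := continuous_abs.comp (continuous_id.sub continuous_const)
    exact ((hχ.continuous.comp (hc.div_const R)).measurable).div ((hrc.comp hc).measurable)
  have hmeas2 : Measurable fun y : ℝ => χ (|y| / R) / |y| ^ (1 + γ) := by
    exact ((hχ.continuous.comp (continuous_abs.div_const R)).measurable).div
      ((hrc.comp continuous_abs).measurable)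
  have hFmeas : AEStronglyMeasurable F volume := by
    apply Measurable.aestronglyMeasurable
    exact (((hθc.comp (continuous_const.add continuous_id)).sub continuous_const).measurable).mul
      (hmeas1.sub hmeas2)
  have hFM : ∀ᵐ y ∂(volume : Measure ℝ), ‖F y‖ ≤ M y :=
    ae_of_all _ fun y => by rw [Real.norm_eq_abs]; exact hFbd y
  have hFint : Integrable F := hMint.mono' hFmeas hFM
  refine ⟨hFint, ?_⟩
  have hbound : |∫ y, F y| ≤ ∫ y, M y := by
    rw [← Real.norm_eq_abs]
    exact norm_integral_le_of_norm_le hMint hFM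
  -- compute the integral of M
  have hMval : ∫ y, M y = 27 * |h| * V *
      (ξ ^ α * (2 * ((3 * R / 4) ^ (-(2 + γ) + 1) / (-(-(2 + γ) + 1))))
        + 2 * ((3 * R / 4) ^ (α - (2 + γ) + 1) / (-(α - (2 + γ) + 1)))) := by
    rw [hM, integral_indicator hSmeas]
    rw [integral_const_mul]
    rw [integral_add (hI₁.1.const_mul (ξ ^ α)) hI₂.1]
    rw [integral_const_mul, hI₁.2, hI₂.2]
  refine le_trans hbound ?_
  rw [hMval]
  rw [show (-(2 + γ) + 1 : ℝ) = -(1 + γ) by ring,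
    show (α - (2 + γ) + 1 : ℝ) = α - (1 + γ) by ring,
    show (-(-(1 + γ)) : ℝ) = 1 + γ by ring,
    show (-(α - (1 + γ)) : ℝ) = 1 + γ - α by ring]
  have hRγ : (0:ℝ) < R ^ γ := Real.rpow_pos_of_pos hR0 γ
  have hR1α : (0:ℝ) < R ^ (1 - α) := Real.rpow_pos_of_pos hR0 _
  have hfrac : ∀ q : ℝ, -2 ≤ q → q ≤ 0 → ((3:ℝ)/4) ^ q ≤ 2 := by
    intro q hq1 hq2
    have e1 : ((3:ℝ)/4) ^ q = ((4:ℝ)/3) ^ (-q) := by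
      rw [show ((3:ℝ)/4) = ((4:ℝ)/3)⁻¹ by norm_num, Real.inv_rpow (by norm_num),
        ← Real.rpow_neg (by norm_num)]
    rw [e1]
    have e2 := Real.rpow_le_rpow_of_exponent_le (by norm_num : (1:ℝ) ≤ 4/3)
      (by linarith : -q ≤ (2:ℝ))
    have e3 : ((4:ℝ)/3) ^ (2:ℝ) = 16/9 := by
      rw [show (2:ℝ) = ((2:ℕ):ℝ) by norm_num, Real.rpow_natCast]
      norm_num
    linarith
  set A : ℝ := (3 * R / 4) ^ (-(1 + γ)) with hAdef
  set B : ℝ := (3 * R / 4) ^ (α - (1 + γ)) with hBdef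
  have hA0 : 0 ≤ A := Real.rpow_nonneg (by linarith) _
  have hB0 : 0 ≤ B := Real.rpow_nonneg (by linarith) _
  have hX : (0:ℝ) ≤ ξ ^ α := Real.rpow_nonneg hξ α
  have hA : A ≤ 2 * ((R ^ γ)⁻¹ * R⁻¹) := by
    have hsplit : A = ((3:ℝ)/4) ^ (-(1 + γ)) * R ^ (-(1 + γ)) := by
      rw [hAdef, ← Real.mul_rpow (by norm_num) hR0.le]
      congr 1
      ring
    have hRe : R ^ (-(1 + γ)) = (R ^ γ)⁻¹ * R⁻¹ := by
      rw [Real.rpow_neg hR0.le, Real.rpow_add hR0, Real.rpow_one, mul_inv]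
      ring
    rw [hsplit, hRe]
    exact mul_le_mul_of_nonneg_right (hfrac _ (by linarith) (by linarith)) (by positivity)
  have hB : B ≤ 2 * ((R ^ γ)⁻¹ * (R ^ (1 - α))⁻¹) := by
    have hsplit : B = ((3:ℝ)/4) ^ (α - (1 + γ)) * R ^ (α - (1 + γ)) := by
      rw [hBdef, ← Real.mul_rpow (by norm_num) hR0.le]
      congr 1
      ring
    have hRe : R ^ (α - (1 + γ)) = (R ^ γ)⁻¹ * (R ^ (1 - α))⁻¹ := by
      rw [show (α - (1 + γ) : ℝ) = -(γ + (1 - α)) by ring, Real.rpow_neg hR0.le,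
        Real.rpow_add hR0, mul_inv]
    rw [hsplit, hRe]
    exact mul_le_mul_of_nonneg_right (hfrac _ (by linarith) (by linarith)) (by positivity)
  have hm1 : (1:ℝ) ≤ max 1 γ₀⁻¹ := le_max_left _ _
  have hmγ : γ₀⁻¹ ≤ max 1 γ₀⁻¹ := le_max_right _ _
  have key1 : ξ ^ α * (2 * (A / (1 + γ))) ≤ 4 * (ξ ^ α * ((R ^ γ)⁻¹ * R⁻¹)) := by
    have u1 : A / (1 + γ) ≤ A := div_le_self hA0 (by linarith)
    calc ξ ^ α * (2 * (A / (1 + γ))) ≤ ξ ^ α * (4 * ((R ^ γ)⁻¹ * R⁻¹)) :=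
          mul_le_mul_of_nonneg_left (by linarith) hX
    _ = 4 * (ξ ^ α * ((R ^ γ)⁻¹ * R⁻¹)) := by ring
  have key2 : 2 * (B / (1 + γ - α)) ≤ (4 * ((R ^ γ)⁻¹ * (R ^ (1 - α))⁻¹)) * γ₀⁻¹ := by
    calc 2 * (B / (1 + γ - α)) ≤ 2 * (B / γ₀) := by
          gcongr
          linarith
    _ ≤ 2 * ((2 * ((R ^ γ)⁻¹ * (R ^ (1 - α))⁻¹)) / γ₀) := by gcongr
    _ = (4 * ((R ^ γ)⁻¹ * (R ^ (1 - α))⁻¹)) * γ₀⁻¹ := by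
        rw [div_eq_mul_inv]
        ring
  have hT1 : (0:ℝ) ≤ ξ ^ α * ((R ^ γ)⁻¹ * R⁻¹) := by positivity
  have hT2 : (0:ℝ) ≤ (R ^ γ)⁻¹ * (R ^ (1 - α))⁻¹ := by positivity
  calc 27 * |h| * V * (ξ ^ α * (2 * (A / (1 + γ))) + 2 * (B / (1 + γ - α)))
      ≤ 27 * |h| * V * (4 * (ξ ^ α * ((R ^ γ)⁻¹ * R⁻¹))
          + (4 * ((R ^ γ)⁻¹ * (R ^ (1 - α))⁻¹)) * γ₀⁻¹) :=
        mul_le_mul_of_nonneg_left (add_le_add key1 key2) (by positivity)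
  _ ≤ 27 * |h| * V * (max 1 γ₀⁻¹ * (4 * (ξ ^ α * ((R ^ γ)⁻¹ * R⁻¹)))
          + max 1 γ₀⁻¹ * (4 * ((R ^ γ)⁻¹ * (R ^ (1 - α))⁻¹))) := by
        refine mul_le_mul_of_nonneg_left (add_le_add ?_ ?_) (by positivity)
        · calc 4 * (ξ ^ α * ((R ^ γ)⁻¹ * R⁻¹))
              = 1 * (4 * (ξ ^ α * ((R ^ γ)⁻¹ * R⁻¹))) := (one_mul _).symm
          _ ≤ max 1 γ₀⁻¹ * (4 * (ξ ^ α * ((R ^ γ)⁻¹ * R⁻¹))) :=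
              mul_le_mul_of_nonneg_right hm1 (by positivity)
        · calc (4 * ((R ^ γ)⁻¹ * (R ^ (1 - α))⁻¹)) * γ₀⁻¹
              = γ₀⁻¹ * (4 * ((R ^ γ)⁻¹ * (R ^ (1 - α))⁻¹)) := by ring
          _ ≤ max 1 γ₀⁻¹ * (4 * ((R ^ γ)⁻¹ * (R ^ (1 - α))⁻¹)) :=
              mul_le_mul_of_nonneg_right hmγ (by positivity)
  _ = 108 * max 1 γ₀⁻¹ * (|h| * V / R ^ γ) * (ξ ^ α / R + 1 / R ^ (1 - α)) := by
        simp only [div_eq_mul_inv, one_mul]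
        ring
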